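/- Let q and T be complex numbers with |q| < 1 and |T| < 1. Then Σ_{n≥0} (Î_n(q)/(q;q)_n) T^n = ∏_{m≥0} (1 − q^m T²)/(1 − q^m T)², where Î_n(q) := Σ_{r=0}^n q^{r(n−r)} [n r]_q; both the series and the infinite product converge absolutely. -/

import Mathlib

set_option maxHeartbeats 1000000

open Finset

namespace Stmt6Aux

noncomputable def qp (q : ℂ) (n : ℕ) : ℂ := ∏ k ∈ Finset.range n, (1 - q ^ (k + 1))
noncomputable def Pa (q a : ℂ) (n : ℕ) : ℂ := ∏ k ∈ Finset.range n, (1 - q ^ k * a)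
noncomputable def PP (q x : ℂ) : ℂ := ∏' m : ℕ, (1 - q ^ m * x)
noncomputable def C (q a : ℂ) (n : ℕ) : ℂ := Pa q a n / qp q n

lemma one_sub_ne {x : ℂ} (h : ‖x‖ < 1) : (1 : ℂ) - x ≠ 0 := by
  intro h0
  have : (1 : ℂ) = x := by linear_combination h0
  rw [← this] at h; simp at h

lemma norm_one_sub_le {x : ℂ} : ‖(1 : ℂ) - x‖ ≤ 1 + ‖x‖ := by
  calc ‖(1 : ℂ) - x‖ ≤ ‖(1:ℂ)‖ + ‖x‖ := norm_sub_le _ _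
  _ = 1 + ‖x‖ := by simp

lemma norm_one_sub_ge {x : ℂ} : 1 - ‖x‖ ≤ ‖(1 : ℂ) - x‖ := by
  have := norm_sub_norm_le (1 : ℂ) x
  simpa using this

lemma norm_qpow_lt {q : ℂ} (hq : ‖q‖ < 1) (k : ℕ) : ‖q ^ (k + 1)‖ < 1 := by
  rw [norm_pow]
  exact pow_lt_one₀ (norm_nonneg q) hq (Nat.succ_ne_zero k)

lemma qp_ne {q : ℂ} (hq : ‖q‖ < 1) (n : ℕ) : qp q n ≠ 0 := by
  refine Finset.prod_ne_zero_iff.2 fun k _ => one_sub_ne (norm_qpow_lt hq k)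

lemma qp_succ (q : ℂ) (n : ℕ) : qp q (n + 1) = qp q n * (1 - q ^ (n + 1)) :=
  Finset.prod_range_succ _ n

lemma Pa_succ (q a : ℂ) (n : ℕ) : Pa q a (n + 1) = Pa q a n * (1 - q ^ n * a) :=
  Finset.prod_range_succ _ n

/-- recurrence for the coefficients -/
lemma C_rec {q : ℂ} (hq : ‖q‖ < 1) (a : ℂ) (n : ℕ) :
    C q a (n + 1) * (1 - q ^ (n + 1)) = C q a n * (1 - q ^ n * a) := by
  unfold C
  rw [qp_succ, Pa_succ]
  have h1 : qp q n ≠ 0 := qp_ne hq n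
  have h2 : (1 : ℂ) - q ^ (n + 1) ≠ 0 := one_sub_ne (norm_qpow_lt hq n)
  field_simp

lemma qp_lower {q : ℂ} (hq : ‖q‖ < 1) : ∃ c > 0, ∀ n, c ≤ ‖qp q n‖ := by
  set r := ‖q‖ with hr
  have hr0 : 0 ≤ r := norm_nonneg q
  have hrk : ∀ k : ℕ, r ^ (k + 1) < 1 := fun k => pow_lt_one₀ hr0 hq (Nat.succ_ne_zero k)
  have hrk0 : ∀ k : ℕ, (0:ℝ) ≤ r ^ (k + 1) := fun k => pow_nonneg hr0 _
  -- summability of logs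
  have hlog : Summable (fun k : ℕ => Real.log (1 - r ^ (k + 1))) := by
    apply Summable.of_norm_bounded (g := fun k => (1 - r)⁻¹ * r ^ (k+1))
    · exact (summable_geometric_of_lt_one hr0 hq).mul_left _ |>.comp_injective (add_left_injective 1)
    · intro k
      have hx : r ^ (k+1) < 1 := hrk k
      have hpos : 0 < 1 - r ^ (k+1) := by linarith
      have hk0 := hrk0 k
      have hle : Real.log (1 - r ^ (k+1)) ≤ 0 := Real.log_nonpos (by linarith) (by linarith)
      rw [Real.norm_eq_abs, abs_of_nonpos hle]
      have : -Real.log (1 - r ^ (k+1)) = Real.log (1 - r ^ (k+1))⁻¹ := (Real.log_inv _).symm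
      rw [this]
      have h2 : Real.log (1 - r ^ (k+1))⁻¹ ≤ (1 - r ^ (k+1))⁻¹ - 1 :=
        Real.log_le_sub_one_of_pos (by positivity)
      have h3 : (1 - r ^ (k+1))⁻¹ - 1 = r^(k+1) / (1 - r^(k+1)) := by field_simp; ring
      have h4 : r^(k+1) / (1 - r^(k+1)) ≤ r^(k+1) / (1 - r) := by
        apply div_le_div_of_nonneg_left (hrk0 k) (by linarith)
        have : r ^ (k+1) ≤ r := by
          calc r ^ (k+1) ≤ r ^ 1 := pow_le_pow_of_le_one hr0 hq.le (by omega)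
          _ = r := pow_one r
        linarith
      have h5 : r^(k+1) / (1 - r) = (1-r)⁻¹ * r^(k+1) := by ring
      linarith
  refine ⟨Real.exp (∑' k : ℕ, Real.log (1 - r ^ (k + 1))), Real.exp_pos _, fun n => ?_⟩
  have key : ∀ n, ∏ k ∈ Finset.range n, (1 - r ^ (k+1)) =
      Real.exp (∑ k ∈ Finset.range n, Real.log (1 - r ^ (k+1))) := by
    intro n
    rw [Real.exp_sum]
    exact Finset.prod_congr rfl fun k _ => (Real.exp_log (by have := hrk k; linarith)).symm
  have hsum_le : ∀ n, (∑' k : ℕ, Real.log (1 - r ^ (k+1))) ≤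
      ∑ k ∈ Finset.range n, Real.log (1 - r ^ (k+1)) := by
    intro n
    have := (hlog.sum_add_tsum_nat_add n).symm
    rw [this]
    have htail : (∑' k : ℕ, Real.log (1 - r ^ (k + n + 1))) ≤ 0 := by
      apply tsum_nonpos
      intro k
      exact Real.log_nonpos (by have := hrk (k+n); linarith) (by have := hrk0 (k+n); linarith)
    simpa using htail
  calc Real.exp (∑' k : ℕ, Real.log (1 - r ^ (k + 1)))
      ≤ Real.exp (∑ k ∈ Finset.range n, Real.log (1 - r ^ (k+1))) := Real.exp_le_exp.2 (hsum_le n)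
    _ = ∏ k ∈ Finset.range n, (1 - r ^ (k+1)) := (key n).symm
    _ ≤ ∏ k ∈ Finset.range n, ‖(1 : ℂ) - q ^ (k+1)‖ := by
        apply Finset.prod_le_prod
        · intro k _; have := hrk k; linarith
        · intro k _
          have : ‖q ^ (k+1)‖ = r ^ (k+1) := by rw [norm_pow]
          calc 1 - r ^ (k+1) = 1 - ‖q^(k+1)‖ := by rw [this]
          _ ≤ ‖(1:ℂ) - q^(k+1)‖ := by
              have := norm_sub_norm_le (1 : ℂ) (q ^ (k+1)); simpa using this
    _ = ‖qp q n‖ := by rw [qp, norm_prod]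


lemma Pa_upper {q : ℂ} (hq : ‖q‖ < 1) {a : ℂ} (ha : ‖a‖ ≤ 1) (n : ℕ) :
    ‖Pa q a n‖ ≤ Real.exp (1 - ‖q‖)⁻¹ := by
  have hr0 : (0:ℝ) ≤ ‖q‖ := norm_nonneg q
  rw [Pa, norm_prod]
  calc ∏ k ∈ Finset.range n, ‖(1:ℂ) - q ^ k * a‖
      ≤ ∏ k ∈ Finset.range n, Real.exp (‖q‖ ^ k) := by
        apply Finset.prod_le_prod (fun k _ => norm_nonneg _)
        intro k _
        calc ‖(1:ℂ) - q ^ k * a‖ ≤ 1 + ‖q ^ k * a‖ := norm_one_sub_le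
        _ ≤ 1 + ‖q‖ ^ k := by
            have : ‖q ^ k * a‖ ≤ ‖q‖ ^ k := by
              rw [norm_mul, norm_pow]
              calc ‖q‖ ^ k * ‖a‖ ≤ ‖q‖ ^ k * 1 := by
                    apply mul_le_mul_of_nonneg_left ha (by positivity)
              _ = ‖q‖ ^ k := mul_one _
            linarith
        _ ≤ Real.exp (‖q‖ ^ k) := by
            have := Real.add_one_le_exp (‖q‖ ^ k); linarith
    _ = Real.exp (∑ k ∈ Finset.range n, ‖q‖ ^ k) := (Real.exp_sum _ _).symm
    _ ≤ Real.exp (1 - ‖q‖)⁻¹ := by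
        apply Real.exp_le_exp.2
        have hs : Summable (fun k : ℕ => ‖q‖ ^ k) := summable_geometric_of_lt_one hr0 hq
        calc ∑ k ∈ Finset.range n, ‖q‖ ^ k ≤ ∑' k : ℕ, ‖q‖ ^ k :=
              hs.sum_le_tsum _ (fun k _ => by positivity)
        _ = (1 - ‖q‖)⁻¹ := tsum_geometric_of_lt_one hr0 hq

lemma summable_C {q : ℂ} (hq : ‖q‖ < 1) {a y : ℂ} (ha : ‖a‖ ≤ 1) (hy : ‖y‖ < 1) :
    Summable (fun n : ℕ => C q a n * y ^ n) := by
  obtain ⟨c, hc0, hc⟩ := qp_lower hq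
  apply Summable.of_norm_bounded (g := fun n => (Real.exp (1 - ‖q‖)⁻¹ / c) * ‖y‖ ^ n)
  · exact (summable_geometric_of_lt_one (norm_nonneg y) hy).mul_left _
  · intro n
    rw [norm_mul, norm_pow]
    apply mul_le_mul_of_nonneg_right _ (by positivity)
    rw [C, norm_div]
    apply div_le_div₀ (by positivity) (Pa_upper hq ha n) hc0 (hc n)

lemma multipliable_P {q : ℂ} (hq : ‖q‖ < 1) {x : ℂ} (hx : ‖x‖ < 1) :
    Multipliable (fun m : ℕ => 1 - q ^ m * x) := by
  have hne : ∀ m : ℕ, (1:ℂ) - q ^ m * x ≠ 0 := by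
    intro m
    apply one_sub_ne
    rw [norm_mul, norm_pow]
    calc ‖q‖ ^ m * ‖x‖ ≤ 1 * ‖x‖ := by
          apply mul_le_mul_of_nonneg_right _ (norm_nonneg x)
          exact pow_le_one₀ (norm_nonneg q) hq.le
    _ < 1 := by rwa [one_mul]
  have hlog : Summable (fun m : ℕ => Complex.log (1 - q ^ m * x)) := by
    apply Summable.of_norm_bounded_eventually_nat (g := fun m => (3/2) * (‖x‖ * ‖q‖ ^ m))
    · exact ((summable_geometric_of_lt_one (norm_nonneg q) hq).mul_left _).mul_left _
    · have htend : Filter.Tendsto (fun m : ℕ => ‖q‖ ^ m * ‖x‖) Filter.atTop (nhds 0) := by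
        have := tendsto_pow_atTop_nhds_zero_of_lt_one (norm_nonneg q) hq
        simpa using this.mul_const ‖x‖
      filter_upwards [htend.eventually_le_const (by norm_num : (0:ℝ) < 1/2)] with m hm
      have hnx : ‖-(q ^ m * x)‖ ≤ 1/2 := by
        rw [norm_neg, norm_mul, norm_pow]; exact hm
      have := Complex.norm_log_one_add_half_le_self hnx
      have heq : (1 : ℂ) + -(q ^ m * x) = 1 - q ^ m * x := by ring
      rw [heq] at this
      calc ‖Complex.log (1 - q ^ m * x)‖ ≤ 3/2 * ‖-(q ^ m * x)‖ := this
      _ = 3/2 * (‖x‖ * ‖q‖ ^ m) := by rw [norm_neg, norm_mul, norm_pow]; ring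
  have h := Complex.multipliable_of_summable_log hlog
  exact h

lemma hasProd_P {q : ℂ} (hq : ‖q‖ < 1) {x : ℂ} (hx : ‖x‖ < 1) :
    HasProd (fun m : ℕ => 1 - q ^ m * x) (PP q x) := (multipliable_P hq hx).hasProd

lemma PP_shift {q : ℂ} (hq : ‖q‖ < 1) {x : ℂ} (hx : ‖x‖ < 1) (s : ℕ) :
    PP q x = Pa q x s * PP q (q ^ s * x) := by
  have hqs : ‖q ^ s * x‖ < 1 := by
    rw [norm_mul, norm_pow]
    calc ‖q‖ ^ s * ‖x‖ ≤ 1 * ‖x‖ :=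
          mul_le_mul_of_nonneg_right (pow_le_one₀ (norm_nonneg q) hq.le) (norm_nonneg x)
    _ < 1 := by rwa [one_mul]
  have hm2 : Multipliable (fun n : ℕ => 1 - q ^ (n + s) * x) :=
    (multipliable_P hq hqs).congr fun n => by rw [pow_add, mul_assoc]
  have h := (Multipliable.prod_mul_tprod_nat_mul' (f := fun m : ℕ => 1 - q ^ m * x) (k := s) hm2).symm
  rw [PP, h, Pa]
  congr 1
  rw [PP]
  exact tprod_congr fun m => by rw [pow_add, mul_assoc]

lemma norm_mul_lt_one {q y : ℂ} (hq : ‖q‖ < 1) (hy : ‖y‖ < 1) : ‖q * y‖ < 1 := by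
  rw [norm_mul]
  calc ‖q‖ * ‖y‖ ≤ 1 * ‖y‖ := mul_le_mul_of_nonneg_right hq.le (norm_nonneg y)
  _ < 1 := by rwa [one_mul]

lemma FE {q : ℂ} (hq : ‖q‖ < 1) {a y : ℂ} (ha : ‖a‖ ≤ 1) (hy : ‖y‖ < 1) :
    (1 - y) * ∑' n : ℕ, C q a n * y ^ n = (1 - a * y) * ∑' n : ℕ, C q a n * (q * y) ^ n := by
  have hqy : ‖q * y‖ < 1 := norm_mul_lt_one hq hy
  have S1 := summable_C hq ha hy
  have S3 := summable_C hq ha hqy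
  set t1 := ∑' n : ℕ, C q a n * y ^ n with ht1
  set t3 := ∑' n : ℕ, C q a n * (q * y) ^ n with ht3
  have Sf : Summable (fun n : ℕ => C q a n * (1 - q ^ n) * y ^ n) :=
    (S1.sub S3).congr fun n => by rw [mul_pow]; ring
  have key : ∑' n : ℕ, C q a n * (1 - q ^ n) * y ^ n
      = ∑' n : ℕ, C q a n * (1 - q ^ n * a) * y ^ (n + 1) := by
    rw [Sf.tsum_eq_zero_add]
    simp only [pow_zero, sub_self, mul_zero, mul_one, zero_mul, zero_add]
    apply tsum_congr
    intro n
    calc C q a (n + 1) * (1 - q ^ (n + 1)) * y ^ (n + 1)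
        = (C q a (n + 1) * (1 - q ^ (n + 1))) * y ^ (n + 1) := by ring
      _ = (C q a n * (1 - q ^ n * a)) * y ^ (n + 1) := by rw [C_rec hq a n]
      _ = C q a n * (1 - q ^ n * a) * y ^ (n + 1) := by ring
  have e_left : ∑' n : ℕ, C q a n * (1 - q ^ n) * y ^ n = t1 - t3 := by
    rw [ht1, ht3, ← S1.tsum_sub S3]
    exact tsum_congr fun n => by rw [mul_pow]; ring
  have e_right : ∑' n : ℕ, C q a n * (1 - q ^ n * a) * y ^ (n + 1)
      = y * t1 - a * y * t3 := by
    have h1 : y * t1 = ∑' n : ℕ, y * (C q a n * y ^ n) := (tsum_mul_left).symm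
    have h3 : a * y * t3 = ∑' n : ℕ, (a * y) * (C q a n * (q * y) ^ n) := (tsum_mul_left).symm
    rw [h1, h3, ← (S1.mul_left y).tsum_sub (S3.mul_left (a * y))]
    exact tsum_congr fun n => by rw [mul_pow]; ring
  have hmain : t1 - t3 = y * t1 - a * y * t3 := by rw [← e_left, ← e_right, key]
  linear_combination hmain

lemma C_zero (q a : ℂ) : C q a 0 = 1 := by simp [C, Pa, qp]

lemma norm_mul_le_one_lt {a y : ℂ} (ha : ‖a‖ ≤ 1) (hy : ‖y‖ < 1) : ‖a * y‖ < 1 := by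
  rw [norm_mul]
  calc ‖a‖ * ‖y‖ ≤ 1 * ‖y‖ := mul_le_mul_of_nonneg_right ha (norm_nonneg y)
  _ < 1 := by rwa [one_mul]

lemma pow_norm_le_one {q : ℂ} (hq : ‖q‖ < 1) (N : ℕ) : ‖q ^ N‖ ≤ 1 := by
  rw [norm_pow]; exact pow_le_one₀ (norm_nonneg q) hq.le

lemma iterate_FE {q : ℂ} (hq : ‖q‖ < 1) {a y : ℂ} (ha : ‖a‖ ≤ 1) (hy : ‖y‖ < 1) (N : ℕ) :
    (∑' n : ℕ, C q a n * y ^ n) * Pa q y N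
      = Pa q (a * y) N * ∑' n : ℕ, C q a n * (q ^ N * y) ^ n := by
  induction N with
  | zero => simp [Pa]
  | succ N ih =>
    have hyN : ‖q ^ N * y‖ < 1 := norm_mul_le_one_lt (pow_norm_le_one hq N) hy
    have hfe := FE hq ha hyN
    rw [Pa_succ, Pa_succ, ← mul_assoc, ih]
    have h1 : (1 : ℂ) - q ^ N * y ≠ 0 := by
      exact one_sub_ne hyN
    have e1 : ∑' n : ℕ, C q a n * (q ^ (N + 1) * y) ^ n
        = ∑' n : ℕ, C q a n * (q * (q ^ N * y)) ^ n := by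
      apply tsum_congr; intro n; rw [pow_succ]; ring_nf
    rw [e1]
    have e2 : (1 : ℂ) - q ^ N * (a * y) = 1 - a * (q ^ N * y) := by ring
    rw [e2]
    -- goal: t * Pa N * (1 - q^N y) -> use hfe
    -- current goal : Pa q (a*y) N * (∑' C n (q^N y)^n) * (1 - q^N*y)
    --   = Pa q (a*y) N * (1 - a*(q^N*y)) * ∑' C n (q*(q^N*y))^n
    calc Pa q (a * y) N * (∑' n : ℕ, C q a n * (q ^ N * y) ^ n) * (1 - q ^ N * y)
        = Pa q (a * y) N * ((1 - q ^ N * y) * ∑' n : ℕ, C q a n * (q ^ N * y) ^ n) := by ring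
      _ = Pa q (a * y) N * ((1 - a * (q ^ N * y)) * ∑' n : ℕ, C q a n * (q * (q ^ N * y)) ^ n) := by
          rw [hfe]
      _ = Pa q (a * y) N * (1 - a * (q ^ N * y)) * ∑' n : ℕ, C q a n * (q * (q ^ N * y)) ^ n := by
          ring

lemma engine {q : ℂ} (hq : ‖q‖ < 1) {a y : ℂ} (ha : ‖a‖ ≤ 1) (hy : ‖y‖ < 1) :
    (∑' n : ℕ, C q a n * y ^ n) * PP q y = PP q (a * y) := by
  obtain ⟨c, hc0, hc⟩ := qp_lower hq
  set K := Real.exp (1 - ‖q‖)⁻¹ with hK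
  have hK0 : 0 < K := Real.exp_pos _
  have hy1 : (0:ℝ) < (1 - ‖y‖)⁻¹ := by
    have : (0:ℝ) < 1 - ‖y‖ := by linarith
    positivity
  set M := K / c * (1 - ‖y‖)⁻¹ with hM
  have hM0 : 0 ≤ M := by positivity
  have hCb : ∀ n, ‖C q a n‖ ≤ K / c := by
    intro n
    rw [C, norm_div]
    exact div_le_div₀ hK0.le (Pa_upper hq ha n) hc0 (hc n)
  have hdiff : ∀ N : ℕ, ‖(∑' n : ℕ, C q a n * (q ^ N * y) ^ n) - 1‖ ≤ M * ‖q‖ ^ N := by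
    intro N
    set z := q ^ N * y with hzdef
    have hzy : ‖z‖ ≤ ‖y‖ := by
      rw [hzdef, norm_mul, norm_pow]
      calc ‖q‖ ^ N * ‖y‖ ≤ 1 * ‖y‖ :=
            mul_le_mul_of_nonneg_right (pow_le_one₀ (norm_nonneg q) hq.le) (norm_nonneg y)
      _ = ‖y‖ := one_mul _
    have hzq : ‖z‖ ≤ ‖q‖ ^ N := by
      rw [hzdef, norm_mul, norm_pow]
      calc ‖q‖ ^ N * ‖y‖ ≤ ‖q‖ ^ N * 1 := mul_le_mul_of_nonneg_left hy.le (by positivity)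
      _ = ‖q‖ ^ N := mul_one _
    have hz1 : ‖z‖ < 1 := lt_of_le_of_lt hzy hy
    have S := summable_C hq ha hz1
    have hterm : ∀ n : ℕ, ‖C q a (n + 1) * z ^ (n + 1)‖ ≤ K / c * ‖z‖ * ‖y‖ ^ n := by
      intro n
      rw [norm_mul, norm_pow]
      calc ‖C q a (n + 1)‖ * ‖z‖ ^ (n + 1) ≤ K / c * ‖z‖ ^ (n + 1) := by
            apply mul_le_mul_of_nonneg_right (hCb (n + 1)) (by positivity)
        _ = K / c * ‖z‖ * ‖z‖ ^ n := by ring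
        _ ≤ K / c * ‖z‖ * ‖y‖ ^ n := by
            apply mul_le_mul_of_nonneg_left (pow_le_pow_left₀ (norm_nonneg z) hzy n)
            positivity
    have Sgeom : Summable (fun n : ℕ => K / c * ‖z‖ * ‖y‖ ^ n) :=
      (summable_geometric_of_lt_one (norm_nonneg y) hy).mul_left _
    have hSnorm : Summable (fun n : ℕ => ‖C q a (n + 1) * z ^ (n + 1)‖) :=
      Summable.of_nonneg_of_le (fun n => norm_nonneg _) hterm Sgeom
    have htail : (∑' n : ℕ, C q a n * z ^ n) - 1 = ∑' n : ℕ, C q a (n + 1) * z ^ (n + 1) := by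
      rw [S.tsum_eq_zero_add, C_zero]
      simp
    rw [htail]
    calc ‖∑' n : ℕ, C q a (n + 1) * z ^ (n + 1)‖
        ≤ ∑' n : ℕ, ‖C q a (n + 1) * z ^ (n + 1)‖ := norm_tsum_le_tsum_norm hSnorm
      _ ≤ ∑' n : ℕ, K / c * ‖z‖ * ‖y‖ ^ n := Summable.tsum_le_tsum hterm hSnorm Sgeom
      _ = K / c * ‖z‖ * (1 - ‖y‖)⁻¹ := by
          rw [tsum_mul_left, tsum_geometric_of_lt_one (norm_nonneg y) hy]
      _ ≤ M * ‖q‖ ^ N := by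
          rw [hM]
          have h1 : K / c * ‖z‖ ≤ K / c * ‖q‖ ^ N :=
            mul_le_mul_of_nonneg_left hzq (by positivity)
          calc K / c * ‖z‖ * (1 - ‖y‖)⁻¹ ≤ K / c * ‖q‖ ^ N * (1 - ‖y‖)⁻¹ :=
                mul_le_mul_of_nonneg_right h1 hy1.le
          _ = K / c * (1 - ‖y‖)⁻¹ * ‖q‖ ^ N := by ring
  have hH1 : Filter.Tendsto (fun N : ℕ => ∑' n : ℕ, C q a n * (q ^ N * y) ^ n)
      Filter.atTop (nhds 1) := by
    have h0 : Filter.Tendsto (fun N : ℕ => M * ‖q‖ ^ N) Filter.atTop (nhds 0) := by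
      have := tendsto_pow_atTop_nhds_zero_of_lt_one (norm_nonneg q) hq
      simpa using this.const_mul M
    have hz := squeeze_zero_norm hdiff h0
    have := hz.add_const 1
    simpa using this
  have hPy : Filter.Tendsto (fun N : ℕ => Pa q y N) Filter.atTop (nhds (PP q y)) :=
    (hasProd_P hq hy).tendsto_prod_nat
  have hay : ‖a * y‖ < 1 := norm_mul_le_one_lt ha hy
  have hPay : Filter.Tendsto (fun N : ℕ => Pa q (a * y) N) Filter.atTop (nhds (PP q (a * y))) :=
    (hasProd_P hq hay).tendsto_prod_nat
  have hL : Filter.Tendsto (fun N : ℕ => (∑' n : ℕ, C q a n * y ^ n) * Pa q y N)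
      Filter.atTop (nhds ((∑' n : ℕ, C q a n * y ^ n) * PP q y)) := hPy.const_mul _
  have hR : Filter.Tendsto
      (fun N : ℕ => Pa q (a * y) N * ∑' n : ℕ, C q a n * (q ^ N * y) ^ n)
      Filter.atTop (nhds (PP q (a * y) * 1)) := hPay.mul hH1
  rw [mul_one] at hR
  have heq : (fun N : ℕ => (∑' n : ℕ, C q a n * y ^ n) * Pa q y N)
      = fun N : ℕ => Pa q (a * y) N * ∑' n : ℕ, C q a n * (q ^ N * y) ^ n :=
    funext fun N => iterate_FE hq ha hy N
  rw [heq] at hL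
  exact tendsto_nhds_unique hL hR

lemma euler {q : ℂ} (hq : ‖q‖ < 1) {y : ℂ} (hy : ‖y‖ < 1) :
    (∑' n : ℕ, y ^ n / qp q n) * PP q y = 1 := by
  have h := engine hq (a := 0) (by simp) hy
  rw [zero_mul] at h
  have hPP0 : PP q 0 = 1 := by
    rw [PP]
    have : (fun m : ℕ => 1 - q ^ m * 0) = fun _ : ℕ => (1 : ℂ) := by funext m; ring
    rw [this, tprod_one]
  rw [hPP0] at h
  rw [← h]
  congr 1
  apply tsum_congr
  intro n
  rw [C, Pa]
  have : (∏ k ∈ Finset.range n, ((1 : ℂ) - q ^ k * 0)) = 1 := by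
    apply Finset.prod_eq_one; intro k _; ring
  rw [this]
  ring

lemma PP_ne {q : ℂ} (hq : ‖q‖ < 1) {y : ℂ} (hy : ‖y‖ < 1) : PP q y ≠ 0 := by
  intro h0
  have h := euler hq hy
  rw [h0, mul_zero] at h
  exact zero_ne_one h

lemma euler_inv {q : ℂ} (hq : ‖q‖ < 1) {y : ℂ} (hy : ‖y‖ < 1) :
    (∑' n : ℕ, y ^ n / qp q n) = (PP q y)⁻¹ :=
  eq_inv_of_mul_eq_one_left (by rw [mul_comm]; exact (mul_comm _ _).trans (euler hq hy))

lemma prod_Icc_one {M : Type*} [CommMonoid M] (f : ℕ → M) (n : ℕ) :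
    ∏ k ∈ Finset.Icc 1 n, f k = ∏ k ∈ Finset.range n, f (k + 1) := by
  induction n with
  | zero => rw [Finset.Icc_eq_empty (by omega)]; simp
  | succ n ih =>
    rw [Finset.prod_Icc_succ_top (by omega), ih, Finset.prod_range_succ]

noncomputable def A (q : ℂ) (m : ℕ) : ℂ := ∏ k ∈ Finset.range m, (q ^ (k + 1) - 1)

lemma A_eq (q : ℂ) (m : ℕ) : A q m = (-1) ^ m * qp q m := by
  rw [A, qp]
  calc ∏ k ∈ Finset.range m, (q ^ (k + 1) - 1)
      = ∏ k ∈ Finset.range m, (-1) * (1 - q ^ (k + 1)) := by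
        apply Finset.prod_congr rfl; intro k _; ring
    _ = (-1) ^ m * ∏ k ∈ Finset.range m, (1 - q ^ (k + 1)) := by
        rw [Finset.prod_mul_distrib, Finset.prod_const, Finset.card_range]

lemma A_ne {q : ℂ} (hq : ‖q‖ < 1) (m : ℕ) : A q m ≠ 0 := by
  rw [A_eq]
  exact mul_ne_zero (pow_ne_zero _ (by norm_num)) (qp_ne hq m)

lemma gauss_eq {q : ℂ} (hq : ‖q‖ < 1) {n r : ℕ} (hrn : r ≤ n) :
    (∏ i ∈ Finset.Icc 1 r, (q ^ (n - r + i) - 1) / (q ^ i - 1))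
      = qp q n / (qp q r * qp q (n - r)) := by
  have hnum : (∏ i ∈ Finset.Icc 1 r, (q ^ (n - r + i) - 1)) = A q n / A q (n - r) := by
    rw [prod_Icc_one]
    have hsplit : A q n = A q (n - r) * ∏ k ∈ Finset.range r, (q ^ (n - r + (k + 1)) - 1) := by
      rw [A, A]
      have h1 : n = (n - r) + r := (Nat.sub_add_cancel hrn).symm
      conv_lhs => rw [h1]
      rw [Finset.prod_range_add]
      congr 1
    rw [hsplit]
    field_simp [A_ne hq (n - r)]
  have hden : (∏ i ∈ Finset.Icc 1 r, (q ^ i - 1)) = A q r := by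
    rw [prod_Icc_one]; rfl
  rw [Finset.prod_div_distrib, hnum, hden]
  rw [A_eq, A_eq, A_eq, div_div]
  have hsign : (-1 : ℂ) ^ (n - r) * (-1) ^ r = (-1) ^ n := by
    rw [← pow_add, Nat.sub_add_cancel hrn]
  have h3 : ((-1 : ℂ)) ^ n ≠ 0 := pow_ne_zero _ (by norm_num)
  have hd : (-1 : ℂ) ^ (n - r) * qp q (n - r) * ((-1) ^ r * qp q r)
      = (-1) ^ n * (qp q r * qp q (n - r)) := by
    rw [← hsign]; ring
  rw [hd, mul_div_mul_left _ _ h3]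

end Stmt6Aux

open Stmt6Aux Finset

/-- For complex `q, T` with `|q| < 1`, `|T| < 1`:
`Σ_{n≥0} Î_n(q)/(q;q)_n Tⁿ = ∏_{m≥0} (1 - qᵐT²)/(1 - qᵐT)²`, where
`Î_n(q) = Σ_{r=0}^n q^{r(n-r)} [n r]_q`; the series converges absolutely and the
infinite product converges absolutely (`Σ_m |factor_m - 1| < ∞`). -/
theorem stmt6 (q T : ℂ) (hq : ‖q‖ < 1) (hT : ‖T‖ < 1) :
    Summable (fun n : ℕ =>
      ‖(∑ r ∈ Finset.range (n + 1), q ^ (r * (n - r)) *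
          ∏ i ∈ Finset.Icc 1 r, (q ^ (n - r + i) - 1) / (q ^ i - 1))
        / (∏ k ∈ Finset.Icc 1 n, (1 - q ^ k)) * T ^ n‖) ∧
    Summable (fun m : ℕ =>
      ‖(1 - q ^ m * T ^ 2) / (1 - q ^ m * T) ^ 2 - 1‖) ∧
    ∑' n : ℕ,
        (∑ r ∈ Finset.range (n + 1), q ^ (r * (n - r)) *
            ∏ i ∈ Finset.Icc 1 r, (q ^ (n - r + i) - 1) / (q ^ i - 1))
          / (∏ k ∈ Finset.Icc 1 n, (1 - q ^ k)) * T ^ n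
      = ∏' m : ℕ, (1 - q ^ m * T ^ 2) / (1 - q ^ m * T) ^ 2 := by
  have hT2 : ‖T ^ 2‖ < 1 := by
    rw [norm_pow]
    exact pow_lt_one₀ (norm_nonneg T) hT two_ne_zero
  set g : ℕ × ℕ → ℂ :=
    fun p => q ^ (p.1 * p.2) * T ^ (p.1 + p.2) / (qp q p.1 * qp q p.2) with hg
  obtain ⟨c, hc0, hc⟩ := qp_lower hq
  have hgeo := summable_geometric_of_lt_one (norm_nonneg T) hT
  have base : Summable (fun p : ℕ × ℕ => ‖T‖ ^ p.1 * ‖T‖ ^ p.2) :=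
    hgeo.mul_of_nonneg hgeo (fun n => by positivity) (fun n => by positivity)
  have hbound : ∀ p : ℕ × ℕ, ‖g p‖ ≤ (c * c)⁻¹ * (‖T‖ ^ p.1 * ‖T‖ ^ p.2) := by
    intro ⟨r, s⟩
    rw [hg]
    simp only
    rw [norm_div, norm_mul, norm_mul, norm_pow, norm_pow, pow_add]
    have hq1 : ‖q‖ ^ (r * s) ≤ 1 := pow_le_one₀ (norm_nonneg q) hq.le
    have hnum : ‖q‖ ^ (r * s) * (‖T‖ ^ r * ‖T‖ ^ s) ≤ ‖T‖ ^ r * ‖T‖ ^ s := by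
      calc ‖q‖ ^ (r * s) * (‖T‖ ^ r * ‖T‖ ^ s) ≤ 1 * (‖T‖ ^ r * ‖T‖ ^ s) :=
            mul_le_mul_of_nonneg_right hq1 (by positivity)
      _ = ‖T‖ ^ r * ‖T‖ ^ s := one_mul _
    have hden : c * c ≤ ‖qp q r‖ * ‖qp q s‖ :=
      mul_le_mul (hc r) (hc s) hc0.le (norm_nonneg _)
    calc ‖q‖ ^ (r * s) * (‖T‖ ^ r * ‖T‖ ^ s) / (‖qp q r‖ * ‖qp q s‖)
        ≤ (‖T‖ ^ r * ‖T‖ ^ s) / (c * c) :=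
          div_le_div₀ (by positivity) hnum (by positivity) hden
      _ = (c * c)⁻¹ * (‖T‖ ^ r * ‖T‖ ^ s) := by ring
  have hGnorm : Summable (fun p : ℕ × ℕ => ‖g p‖) :=
    Summable.of_nonneg_of_le (fun _ => norm_nonneg _) hbound (base.mul_left _)
  have hG : Summable g := hGnorm.of_norm
  -- statement term equals antidiagonal sum
  have hterm : ∀ n : ℕ,
      (∑ r ∈ Finset.range (n + 1), q ^ (r * (n - r)) *
          ∏ i ∈ Finset.Icc 1 r, (q ^ (n - r + i) - 1) / (q ^ i - 1))
        / (∏ k ∈ Finset.Icc 1 n, (1 - q ^ k)) * T ^ n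
      = ∑ p ∈ Finset.HasAntidiagonal.antidiagonal n, g p := by
    intro n
    rw [Finset.Nat.sum_antidiagonal_eq_sum_range_succ_mk]
    have hqpIcc : (∏ k ∈ Finset.Icc 1 n, (1 - q ^ k)) = qp q n := by
      rw [qp, prod_Icc_one]
    rw [hqpIcc, Finset.sum_div, Finset.sum_mul]
    apply Finset.sum_congr rfl
    intro r hr
    have hrn : r ≤ n := by rw [Finset.mem_range] at hr; omega
    rw [gauss_eq hq hrn]
    have hrr : r + (n - r) = n := by omega
    show q ^ (r * (n - r)) * (qp q n / (qp q r * qp q (n - r))) / qp q n * T ^ n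
      = q ^ (r * (n - r)) * T ^ (r + (n - r)) / (qp q r * qp q (n - r))
    rw [hrr]
    have e1 := qp_ne hq r
    have e2 := qp_ne hq (n - r)
    have e3 := qp_ne hq n
    field_simp
  -- summability of row sums of norms
  have hsig : Summable ((fun p : ℕ × ℕ => ‖g p‖) ∘ Finset.HasAntidiagonal.sigmaAntidiagonalEquivProd) :=
    (Equiv.summable_iff _).2 hGnorm
  have hrows : Summable (fun n : ℕ => ∑ p ∈ Finset.HasAntidiagonal.antidiagonal n, ‖g p‖) := by
    have h0 : Summable (fun n : ℕ =>
        ∑' p : (Finset.HasAntidiagonal.antidiagonal n : Finset (ℕ × ℕ)), ‖g p‖) := hsig.sigma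
    exact Summable.congr h0 fun n => Finset.tsum_subtype (Finset.HasAntidiagonal.antidiagonal n) (fun p => ‖g p‖)
  have hs1 : Summable (fun n : ℕ =>
      ‖(∑ r ∈ Finset.range (n + 1), q ^ (r * (n - r)) *
          ∏ i ∈ Finset.Icc 1 r, (q ^ (n - r + i) - 1) / (q ^ i - 1))
        / (∏ k ∈ Finset.Icc 1 n, (1 - q ^ k)) * T ^ n‖) := by
    apply Summable.of_nonneg_of_le (fun n => norm_nonneg _) _ hrows
    intro n
    rw [hterm n]
    exact norm_sum_le _ _
  -- tsum over n equals double tsum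
  have hsigG : Summable (g ∘ Finset.HasAntidiagonal.sigmaAntidiagonalEquivProd) := (Equiv.summable_iff _).2 hG
  have hsum_eq : (∑' n : ℕ,
      (∑ r ∈ Finset.range (n + 1), q ^ (r * (n - r)) *
          ∏ i ∈ Finset.Icc 1 r, (q ^ (n - r + i) - 1) / (q ^ i - 1))
        / (∏ k ∈ Finset.Icc 1 n, (1 - q ^ k)) * T ^ n) = ∑' p : ℕ × ℕ, g p := by
    rw [tsum_congr hterm]
    calc ∑' n : ℕ, ∑ p ∈ Finset.HasAntidiagonal.antidiagonal n, g p
        = ∑' n : ℕ, ∑' p : (Finset.HasAntidiagonal.antidiagonal n : Finset (ℕ × ℕ)), g p :=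
          tsum_congr fun n => (Finset.tsum_subtype _ _).symm
      _ = ∑' x : Σ n : ℕ, (Finset.HasAntidiagonal.antidiagonal n : Finset (ℕ × ℕ)),
            (g ∘ Finset.HasAntidiagonal.sigmaAntidiagonalEquivProd) x := (hsigG.tsum_sigma).symm
      _ = ∑' p : ℕ × ℕ, g p := Finset.HasAntidiagonal.sigmaAntidiagonalEquivProd.tsum_eq g
  -- evaluate inner sums
  have hPT := PP_ne hq hT
  have hinner : ∀ r : ℕ, (∑' s : ℕ, g (r, s))
      = (PP q T)⁻¹ * (C q T r * T ^ r) := by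
    intro r
    have hqr : ‖q ^ r * T‖ < 1 := norm_mul_le_one_lt (pow_norm_le_one hq r) hT
    have h1 : ∀ s : ℕ, g (r, s) = T ^ r / qp q r * ((q ^ r * T) ^ s / qp q s) := by
      intro s
      rw [hg]
      simp only
      rw [mul_pow, pow_mul, pow_add]
      ring
    rw [tsum_congr h1, tsum_mul_left, euler_inv hq hqr]
    have hshift := PP_shift hq hT r
    have hPrT := PP_ne hq hqr
    have hinv : (PP q (q ^ r * T))⁻¹ = Pa q T r * (PP q T)⁻¹ := by
      field_simp
      linear_combination hshift
    rw [hinv, C]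
    have := qp_ne hq r
    field_simp
  have hdouble : (∑' p : ℕ × ℕ, g p) = (PP q T)⁻¹ * ∑' r : ℕ, C q T r * T ^ r := by
    rw [hG.tsum_prod' hG.prod_factor, tsum_congr hinner, tsum_mul_left]
  have hengine := engine hq (a := T) hT.le hT
  -- RHS product
  have hnumP : HasProd (fun m : ℕ => 1 - q ^ m * T ^ 2) (PP q (T ^ 2)) := hasProd_P hq hT2
  have hden1 := hasProd_P hq hT
  have hdenP : HasProd (fun m : ℕ => (1 - q ^ m * T) ^ 2) ((PP q T) ^ 2) := by
    have h := hden1.mul hden1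
    have heq : (fun m : ℕ => (1 - q ^ m * T) * (1 - q ^ m * T))
        = fun m : ℕ => (1 - q ^ m * T) ^ 2 := funext fun m => (sq _).symm
    rw [heq] at h
    rwa [← sq] at h
  have h2ne : ((PP q T) ^ 2 : ℂ) ≠ 0 := pow_ne_zero _ hPT
  have hprod : HasProd (fun m : ℕ => (1 - q ^ m * T ^ 2) / (1 - q ^ m * T) ^ 2)
      (PP q (T ^ 2) / (PP q T) ^ 2) := by
    have h1' : Filter.Tendsto (fun s : Finset ℕ => ∏ m ∈ s, (1 - q ^ m * T ^ 2))
        Filter.atTop (nhds (PP q (T ^ 2))) := hnumP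
    have h2' : Filter.Tendsto (fun s : Finset ℕ => ∏ m ∈ s, ((1 - q ^ m * T) ^ 2))
        Filter.atTop (nhds ((PP q T) ^ 2)) := hdenP
    exact Filter.Tendsto.congr (fun s => (Finset.prod_div_distrib _ _).symm) (h1'.div h2' h2ne)
  -- summability #2
  have hs2 : Summable (fun m : ℕ => ‖(1 - q ^ m * T ^ 2) / (1 - q ^ m * T) ^ 2 - 1‖) := by
    have hd0 : (0:ℝ) < 1 - ‖T‖ := by linarith
    apply Summable.of_nonneg_of_le (f := fun m : ℕ => 4 / (1 - ‖T‖) ^ 2 * ‖q‖ ^ m)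
      (fun m => norm_nonneg _)
    · intro m
      have hqm : ‖q ^ m * T‖ < 1 := norm_mul_le_one_lt (pow_norm_le_one hq m) hT
      have hb0 : ((1:ℂ) - q ^ m * T) ^ 2 ≠ 0 := pow_ne_zero _ (one_sub_ne hqm)
      have hbl : 1 - ‖T‖ ≤ ‖(1:ℂ) - q ^ m * T‖ := by
        have h1 : ‖q ^ m * T‖ ≤ ‖T‖ := by
          rw [norm_mul, norm_pow]
          calc ‖q‖ ^ m * ‖T‖ ≤ 1 * ‖T‖ :=
                mul_le_mul_of_nonneg_right (pow_le_one₀ (norm_nonneg q) hq.le) (norm_nonneg T)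
          _ = ‖T‖ := one_mul _
        have h2 := norm_one_sub_ge (x := q ^ m * T)
        linarith
      have hkey : (1 - q ^ m * T ^ 2) / (1 - q ^ m * T) ^ 2 - 1
          = q ^ m * (2 * T - T ^ 2 - q ^ m * T ^ 2) / (1 - q ^ m * T) ^ 2 := by
        rw [div_sub_one hb0]
        ring
      rw [hkey, norm_div, norm_mul]
      have hnum2 : ‖(2 * T - T ^ 2 - q ^ m * T ^ 2 : ℂ)‖ ≤ 4 := by
        have hT0 : ‖T‖ ≤ 1 := hT.le
        have h1 : ‖(2 * T : ℂ)‖ ≤ 2 := by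
          rw [norm_mul]
          simp only [Complex.norm_ofNat]
          nlinarith
        have h2 : ‖(T ^ 2 : ℂ)‖ ≤ 1 := by rw [norm_pow]; exact pow_le_one₀ (norm_nonneg T) hT.le
        have h3 : ‖(q ^ m * T ^ 2 : ℂ)‖ ≤ 1 := by
          rw [norm_mul, norm_pow, norm_pow]
          have hh1 := pow_le_one₀ (norm_nonneg q) hq.le (n := m)
          have hh2 := pow_le_one₀ (norm_nonneg T) hT.le (n := 2)
          have hh3 : (0:ℝ) ≤ ‖q‖ ^ m := by positivity
          have hh4 : (0:ℝ) ≤ ‖T‖ ^ 2 := by positivity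
          nlinarith
        calc ‖(2 * T - T ^ 2 - q ^ m * T ^ 2 : ℂ)‖
            ≤ ‖(2 * T - T ^ 2 : ℂ)‖ + ‖(q ^ m * T ^ 2 : ℂ)‖ := norm_sub_le _ _
          _ ≤ ‖(2 * T : ℂ)‖ + ‖(T ^ 2 : ℂ)‖ + ‖(q ^ m * T ^ 2 : ℂ)‖ := by
              have := norm_sub_le (2 * T : ℂ) (T ^ 2); linarith
          _ ≤ 4 := by linarith
      have hden2 : (1 - ‖T‖) ^ 2 ≤ ‖((1:ℂ) - q ^ m * T) ^ 2‖ := by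
        rw [norm_pow]
        exact pow_le_pow_left₀ hd0.le hbl 2
      calc ‖(q ^ m : ℂ)‖ * ‖(2 * T - T ^ 2 - q ^ m * T ^ 2 : ℂ)‖ / ‖((1:ℂ) - q ^ m * T) ^ 2‖
          ≤ ‖q‖ ^ m * 4 / (1 - ‖T‖) ^ 2 := by
            rw [norm_pow]
            apply div_le_div₀ (by positivity) _ (by positivity) hden2
            exact mul_le_mul_of_nonneg_left hnum2 (by positivity)
        _ = 4 / (1 - ‖T‖) ^ 2 * ‖q‖ ^ m := by ring
    · exact (summable_geometric_of_lt_one (norm_nonneg q) hq).mul_left _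
  refine ⟨hs1, hs2, ?_⟩
  rw [hsum_eq, hdouble, hprod.tprod_eq]
  have hTT : PP q (T * T) = PP q (T ^ 2) := by rw [sq]
  rw [← hTT, ← hengine]
  field_simp
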